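/- Let n ≥ 5 be an odd integer and let μ(n) > 0 be a constant such that for all 0 < μ ≤ μ(n) one has ψ₁ > 0 and ψ₂ < 0 on (0,1] whenever a₁ > 0 and a_{n−1} < 0. Then one can choose a₁ > 0 and a_{n−1} < 0 such that the function ψ̄(t) := ψ₁(t) + ψ₂(t) satisfies ψ̄(t) ≥ 0 for all t ∈ [0,1] and all 0 < μ ≤ μ(n). -/

import Mathlib

open Set

open Set

/-- Coefficients `a_{2p+1}` (indexed by `p`) of the odd power-series solution `ψ₁`:
`a₁` given and `a_{2p+1} = −(2(2p−1)μ/(p[(2p+1)(2p−1)−(n−1)(n−3)])) a_{2p−1}` for `p ≥ 1`. -/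
noncomputable def oddCoeff (n : ℕ) (μ a₁ : ℝ) : ℕ → ℝ
  | 0 => a₁
  | p + 1 =>
    -(2 * (2 * ((p : ℝ) + 1) - 1) * μ /
        (((p : ℝ) + 1) *
          ((2 * ((p : ℝ) + 1) + 1) * (2 * ((p : ℝ) + 1) - 1) - ((n : ℝ) - 1) * ((n : ℝ) - 3)))) *
      oddCoeff n μ a₁ p

/-- `ψ₁(t) = Σ_{p≥0} a_{2p+1} t^{2p+1}`. -/
noncomputable def psiOne (n : ℕ) (μ a₁ : ℝ) (t : ℝ) : ℝ :=
  ∑' p : ℕ, oddCoeff n μ a₁ p * t ^ (2 * p + 1)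

/-- Coefficients `a_{2p}` (indexed by `p`) of the even power-series solution `ψ₂`:
`a_{2p} = 0` for `p < (n−1)/2`, `a_{n−1}` given (at `p = (n−1)/2`), and
`a_{2p} = −(8(p−1)μ/((2p−1)[4p(p−1)−(n−1)(n−3)])) a_{2p−2}` for `p ≥ (n+1)/2`. -/
noncomputable def evenCoeff (n : ℕ) (μ aN : ℝ) : ℕ → ℝ
  | 0 => 0
  | p + 1 =>
    if p + 1 < (n - 1) / 2 then 0
    else if p + 1 = (n - 1) / 2 then aN
    else
      -(8 * (((p : ℝ) + 1) - 1) * μ /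
          ((2 * ((p : ℝ) + 1) - 1) *
            (4 * ((p : ℝ) + 1) * (((p : ℝ) + 1) - 1) - ((n : ℝ) - 1) * ((n : ℝ) - 3)))) *
        evenCoeff n μ aN p

/-- `ψ₂(t) = Σ_{p≥0} a_{2p} t^{2p}`. -/
noncomputable def psiTwo (n : ℕ) (μ aN : ℝ) (t : ℝ) : ℝ :=
  ∑' p : ℕ, evenCoeff n μ aN p * t ^ (2 * p)

lemma oddCoeff_linear (n : ℕ) (μ a₁ : ℝ) : ∀ p, oddCoeff n μ a₁ p = a₁ * oddCoeff n μ 1 p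
  | 0 => by simp [oddCoeff]
  | p + 1 => by rw [oddCoeff, oddCoeff, oddCoeff_linear n μ a₁ p]; ring

lemma evenCoeff_linear (n : ℕ) (μ aN : ℝ) : ∀ p, evenCoeff n μ aN p = aN * evenCoeff n μ 1 p
  | 0 => by simp [evenCoeff]
  | p + 1 => by
      rw [evenCoeff, evenCoeff]
      split_ifs with h1 h2
      · simp
      · simp
      · rw [evenCoeff_linear n μ aN p]; ring

lemma oddCoeff_continuous (n p : ℕ) : Continuous fun μ : ℝ => oddCoeff n μ 1 p := by
  induction p with
  | zero => simpa [oddCoeff] using continuous_const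
  | succ p ih => simp only [oddCoeff]; fun_prop


private lemma absFactor {c d μ μ' a b : ℝ} (hc : 0 ≤ c) (h0 : 0 ≤ μ) (h : μ ≤ μ')
    (hab : |a| ≤ |b|) : |(-(c * μ / d)) * a| ≤ |(-(c * μ' / d)) * b| := by
  rw [abs_mul, abs_mul, abs_neg, abs_neg, abs_div, abs_div, div_eq_mul_inv, div_eq_mul_inv,
    abs_of_nonneg (mul_nonneg hc h0), abs_of_nonneg (mul_nonneg hc (h0.trans h))]
  have h1 : c * μ ≤ c * μ' := mul_le_mul_of_nonneg_left h hc
  have h2 : 0 ≤ |d|⁻¹ := inv_nonneg.2 (abs_nonneg _)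
  exact mul_le_mul (mul_le_mul_of_nonneg_right h1 h2) hab (abs_nonneg _)
    (mul_nonneg (mul_nonneg hc (h0.trans h)) h2)

lemma oddCoeff_mono (n : ℕ) {μ μ' : ℝ} (h0 : 0 ≤ μ) (h : μ ≤ μ') :
    ∀ p, |oddCoeff n μ 1 p| ≤ |oddCoeff n μ' 1 p|
  | 0 => le_rfl
  | p + 1 => by
    rw [oddCoeff, oddCoeff]
    exact absFactor (by have := (Nat.cast_nonneg p : (0:ℝ) ≤ p); nlinarith) h0 h (oddCoeff_mono n h0 h p)

lemma evenCoeff_mono (n : ℕ) {μ μ' : ℝ} (h0 : 0 ≤ μ) (h : μ ≤ μ') :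
    ∀ p, |evenCoeff n μ 1 p| ≤ |evenCoeff n μ' 1 p|
  | 0 => le_rfl
  | p + 1 => by
    rw [evenCoeff, evenCoeff]
    split_ifs with h1 h2
    · exact le_rfl
    · exact le_rfl
    · exact absFactor (by have := (Nat.cast_nonneg p : (0:ℝ) ≤ p); nlinarith) h0 h (evenCoeff_mono n h0 h p)

lemma oddCoeff_summable (n : ℕ) (hn : 5 ≤ n) (μn : ℝ) (hμn : 0 < μn) :
    Summable fun p => |oddCoeff n μn 1 p| := by
  apply summable_of_ratio_norm_eventually_le (r := 1/2) (by norm_num)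
  rw [Filter.eventually_atTop]
  refine ⟨max (n + 1) ⌈3 * μn⌉₊, fun p hp => ?_⟩
  have hpn : n + 1 ≤ p := (le_max_left _ _).trans hp
  have hp1 : (n : ℝ) + 1 ≤ (p : ℝ) := by exact_mod_cast hpn
  have hp2 : 3 * μn ≤ (p : ℝ) := (Nat.le_ceil _).trans
    (by exact_mod_cast (le_max_right (n + 1) ⌈3 * μn⌉₊).trans hp)
  have hn5 : (5 : ℝ) ≤ (n : ℝ) := by exact_mod_cast hn
  simp only [Real.norm_eq_abs, abs_abs]
  rw [oddCoeff, abs_mul]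
  set P := (p : ℝ) with hP
  have hP6 : (6 : ℝ) ≤ P := by linarith
  have hprod : ((n : ℝ) - 1) * ((n : ℝ) - 3) ≤ (P - 2) * (P - 4) :=
    mul_le_mul (by linarith) (by linarith) (by linarith) (by linarith)
  have hd : 0 < (P + 1) * ((2 * (P + 1) + 1) * (2 * (P + 1) - 1) - ((n : ℝ) - 1) * ((n : ℝ) - 3)) := by
    nlinarith [hprod, sq_nonneg P]
  have hnum : 0 ≤ 2 * (2 * (P + 1) - 1) * μn := by nlinarith
  have hμP : μn ≤ P / 3 := by linarith
  have hfac : |(-(2 * (2 * (P + 1) - 1) * μn /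
      ((P + 1) * ((2 * (P + 1) + 1) * (2 * (P + 1) - 1) - ((n : ℝ) - 1) * ((n : ℝ) - 3)))))| ≤ 1/2 := by
    rw [abs_neg, abs_div, abs_of_nonneg hnum, abs_of_pos hd, div_le_iff₀ hd]
    nlinarith [hprod, mul_le_mul_of_nonneg_left hμP (show (0:ℝ) ≤ 2 * (2 * (P + 1) - 1) by nlinarith), sq_nonneg P]
  exact mul_le_mul_of_nonneg_right hfac (abs_nonneg _)

lemma evenCoeff_summable (n : ℕ) (hn : 5 ≤ n) (μn : ℝ) (hμn : 0 < μn) :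
    Summable fun p => |evenCoeff n μn 1 p| := by
  apply summable_of_ratio_norm_eventually_le (r := 1/2) (by norm_num)
  rw [Filter.eventually_atTop]
  refine ⟨max (n + 1) ⌈3 * μn⌉₊, fun p hp => ?_⟩
  have hpn : n + 1 ≤ p := (le_max_left _ _).trans hp
  have hp1 : (n : ℝ) + 1 ≤ (p : ℝ) := by exact_mod_cast hpn
  have hp2 : 3 * μn ≤ (p : ℝ) := (Nat.le_ceil _).trans
    (by exact_mod_cast (le_max_right (n + 1) ⌈3 * μn⌉₊).trans hp)
  have hn5 : (5 : ℝ) ≤ (n : ℝ) := by exact_mod_cast hn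
  simp only [Real.norm_eq_abs, abs_abs]
  rw [evenCoeff]
  rw [if_neg (by omega), if_neg (by omega)]
  rw [abs_mul]
  set P := (p : ℝ) with hP
  have hP6 : (6 : ℝ) ≤ P := by linarith
  have hprod : ((n : ℝ) - 1) * ((n : ℝ) - 3) ≤ (P - 2) * (P - 4) :=
    mul_le_mul (by linarith) (by linarith) (by linarith) (by linarith)
  have hd : 0 < (2 * (P + 1) - 1) * (4 * (P + 1) * ((P + 1) - 1) - ((n : ℝ) - 1) * ((n : ℝ) - 3)) := by
    nlinarith [hprod, sq_nonneg P]
  have hnum : 0 ≤ 8 * ((P + 1) - 1) * μn := by nlinarith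
  have hμP : μn ≤ P / 3 := by linarith
  have hfac : |(-(8 * ((P + 1) - 1) * μn /
      ((2 * (P + 1) - 1) * (4 * (P + 1) * ((P + 1) - 1) - ((n : ℝ) - 1) * ((n : ℝ) - 3)))))| ≤ 1/2 := by
    rw [abs_neg, abs_div, abs_of_nonneg hnum, abs_of_pos hd, div_le_iff₀ hd]
    nlinarith [hprod, mul_le_mul_of_nonneg_left hμP (show (0:ℝ) ≤ 8 * ((P + 1) - 1) by nlinarith), sq_nonneg P]
  exact mul_le_mul_of_nonneg_right hfac (abs_nonneg _)

/-- Let `n ≥ 5` be odd and `μ(n) > 0` be such that for all `0 < μ ≤ μ(n)`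
one has `ψ₁ > 0` and `ψ₂ < 0` on `(0,1]` whenever `a₁ > 0` and `a_{n−1} < 0`. Then one can
choose `a₁ > 0` and `a_{n−1} < 0` such that `ψ̄ = ψ₁ + ψ₂ ≥ 0` on `[0,1]` for all
`0 < μ ≤ μ(n)`. -/
theorem stmt_13 (n : ℕ) (hn : 5 ≤ n) (hodd : Odd n) (μn : ℝ) (hμn : 0 < μn)
    (h : ∀ μ : ℝ, 0 < μ → μ ≤ μn →
      (∀ a₁ : ℝ, 0 < a₁ → ∀ t ∈ Ioc (0 : ℝ) 1, 0 < psiOne n μ a₁ t) ∧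
      (∀ aN : ℝ, aN < 0 → ∀ t ∈ Ioc (0 : ℝ) 1, psiTwo n μ aN t < 0)) :
    ∃ a₁ : ℝ, 0 < a₁ ∧ ∃ aN : ℝ, aN < 0 ∧
      ∀ μ : ℝ, 0 < μ → μ ≤ μn →
        ∀ t ∈ Icc (0 : ℝ) 1, 0 ≤ psiOne n μ a₁ t + psiTwo n μ aN t := by
  classical
  have hns : Summable fun p => |oddCoeff n μn 1 p| := oddCoeff_summable n hn μn hμn
  have hes : Summable fun p => |evenCoeff n μn 1 p| := evenCoeff_summable n hn μn hμn
  set K : Set (ℝ × ℝ) := Icc (0:ℝ) μn ×ˢ Icc (0:ℝ) 1 with hK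
  have hKc : IsCompact K := isCompact_Icc.prod isCompact_Icc
  set F : ℝ × ℝ → ℝ := fun x => ∑' p : ℕ, oddCoeff n x.1 1 p * x.2 ^ (2 * p) with hF
  have hFcont : ContinuousOn F K := by
    apply continuousOn_tsum (u := fun p => |oddCoeff n μn 1 p|) ?_ hns ?_
    · intro p
      exact (((oddCoeff_continuous n p).comp continuous_fst).mul (continuous_snd.pow _)).continuousOn
    · rintro p ⟨μ, t⟩ hx
      simp only [hK, Set.mem_prod, Set.mem_Icc] at hx
      obtain ⟨⟨hμ0, hμ1⟩, ht0, ht1⟩ := hx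
      rw [Real.norm_eq_abs, abs_mul]
      calc |oddCoeff n μ 1 p| * |t ^ (2 * p)| ≤ |oddCoeff n μn 1 p| * 1 := by
            apply mul_le_mul (oddCoeff_mono n hμ0 hμ1 p) ?_ (abs_nonneg _) (abs_nonneg _)
            rw [abs_pow]
            exact pow_le_one₀ (abs_nonneg t) (abs_le.2 ⟨by linarith, ht1⟩)
        _ = _ := mul_one _
  have hFeq : ∀ μ t : ℝ, psiOne n μ 1 t = F (μ, t) * t := by
    intro μ t
    rw [hF, psiOne, ← tsum_mul_right]
    apply tsum_congr
    intro p
    rw [pow_succ]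
    ring
  have hFpos : ∀ x ∈ K, 0 < F x := by
    rintro ⟨μ, t⟩ hx
    simp only [hK, Set.mem_prod, Set.mem_Icc] at hx
    obtain ⟨⟨hμ0, hμ1⟩, ht0, ht1⟩ := hx
    rcases eq_or_lt_of_le ht0 with ht | ht
    · have hone : F (μ, t) = 1 := by
        rw [hF]
        simp only
        rw [tsum_eq_single 0 ?_]
        · simp [oddCoeff]
        · intro p hp
          have hz : t ^ (2 * p) = 0 := by rw [← ht]; exact zero_pow (by omega)
          rw [hz, mul_zero]
      rw [hone]; norm_num
    rcases eq_or_lt_of_le hμ0 with hμ | hμ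
    · have hone : F (μ, t) = 1 := by
        rw [hF]
        simp only
        rw [tsum_eq_single 0 ?_]
        · simp [oddCoeff]
        · intro p hp
          cases p with
          | zero => exact absurd rfl hp
          | succ q => rw [oddCoeff, ← hμ]; simp
      rw [hone]; norm_num
    · have hpos := (h μ hμ hμ1).1 1 one_pos t ⟨ht, ht1⟩
      rw [hFeq μ t] at hpos
      nlinarith
  obtain ⟨x₀, hx₀K, hmin⟩ := hKc.exists_isMinOn
    ⟨(0, 0), ⟨⟨le_rfl, hμn.le⟩, le_rfl, zero_le_one⟩⟩ hFcont
  set m := F x₀ with hm'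
  have hm : 0 < m := hFpos x₀ hx₀K
  set M : ℝ := ∑' p : ℕ, |evenCoeff n μn 1 (p + 1)| with hM'
  have hshift : Summable fun p : ℕ => |evenCoeff n μn 1 (p + 1)| :=
    hes.comp_injective fun a b hab => by omega
  have hM0 : 0 ≤ M := tsum_nonneg fun _ => abs_nonneg _
  have hε : 0 < m / (M + 1) := by positivity
  refine ⟨1, one_pos, -(m / (M + 1)), by linarith, ?_⟩
  intro μ hμ hμle t ht
  obtain ⟨ht0, ht1⟩ := ht
  have hxK : (μ, t) ∈ K := ⟨⟨hμ.le, hμle⟩, ht0, ht1⟩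
  have habs : ∀ p : ℕ, |evenCoeff n μ 1 p * t ^ (2 * p)| ≤ |evenCoeff n μn 1 p| := by
    intro p
    rw [abs_mul]
    calc |evenCoeff n μ 1 p| * |t ^ (2 * p)| ≤ |evenCoeff n μn 1 p| * 1 := by
          apply mul_le_mul (evenCoeff_mono n hμ.le hμle p) ?_ (abs_nonneg _) (abs_nonneg _)
          rw [abs_pow]
          exact pow_le_one₀ (abs_nonneg t) (abs_le.2 ⟨by linarith, ht1⟩)
      _ = _ := mul_one _
  have hsum2 : Summable fun p : ℕ => evenCoeff n μ 1 p * t ^ (2 * p) :=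
    Summable.of_norm_bounded hes fun p => by rw [Real.norm_eq_abs]; exact habs p
  set g : ℝ := ∑' p : ℕ, evenCoeff n μ 1 (p + 1) * t ^ (2 * p) with hg
  have hGeq : psiTwo n μ 1 t = g * t ^ 2 := by
    rw [psiTwo, Summable.tsum_eq_zero_add hsum2]
    have h0 : evenCoeff n μ 1 0 * t ^ (2 * 0) = 0 := by simp [evenCoeff]
    rw [h0, zero_add, hg, ← tsum_mul_right]
    apply tsum_congr
    intro p
    rw [show 2 * (p + 1) = 2 * p + 2 by ring, pow_add]
    ring
  have habs' : ∀ p : ℕ, |evenCoeff n μ 1 (p + 1) * t ^ (2 * (p + 1))| ≤ |evenCoeff n μn 1 (p + 1)| :=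
    fun p => habs (p + 1)
  have hsumg : Summable fun p : ℕ => |evenCoeff n μ 1 (p + 1) * t ^ (2 * p)| := by
    apply Summable.of_nonneg_of_le (fun _ => abs_nonneg _) ?_ hshift
    intro p
    rw [abs_mul]
    calc |evenCoeff n μ 1 (p + 1)| * |t ^ (2 * p)| ≤ |evenCoeff n μn 1 (p + 1)| * 1 := by
          apply mul_le_mul (evenCoeff_mono n hμ.le hμle (p + 1)) ?_ (abs_nonneg _) (abs_nonneg _)
          rw [abs_pow]
          exact pow_le_one₀ (abs_nonneg t) (abs_le.2 ⟨by linarith, ht1⟩)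
      _ = _ := mul_one _
  have hgM : |g| ≤ M := by
    rw [hg, hM']
    calc |∑' p : ℕ, evenCoeff n μ 1 (p + 1) * t ^ (2 * p)|
        ≤ ∑' p : ℕ, |evenCoeff n μ 1 (p + 1) * t ^ (2 * p)| := by
          have hnorm := norm_tsum_le_tsum_norm
            (f := fun p : ℕ => evenCoeff n μ 1 (p + 1) * t ^ (2 * p))
            (by simpa only [Real.norm_eq_abs] using hsumg)
          simpa only [Real.norm_eq_abs] using hnorm
      _ ≤ ∑' p : ℕ, |evenCoeff n μn 1 (p + 1)| := by
          apply Summable.tsum_le_tsum ?_ hsumg hshift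
          intro p
          rw [abs_mul]
          calc |evenCoeff n μ 1 (p + 1)| * |t ^ (2 * p)| ≤ |evenCoeff n μn 1 (p + 1)| * 1 := by
                apply mul_le_mul (evenCoeff_mono n hμ.le hμle (p + 1)) ?_ (abs_nonneg _) (abs_nonneg _)
                rw [abs_pow]
                exact pow_le_one₀ (abs_nonneg t) (abs_le.2 ⟨by linarith, ht1⟩)
            _ = _ := mul_one _
  have hlin : psiTwo n μ (-(m / (M + 1))) t = -(m / (M + 1)) * psiTwo n μ 1 t := by
    rw [psiTwo, psiTwo, ← tsum_mul_left]
    apply tsum_congr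
    intro p
    rw [evenCoeff_linear]
    ring
  rw [hFeq μ t, hlin, hGeq]
  have hmF : m ≤ F (μ, t) := hmin hxK
  have hεm : m / (M + 1) * (M + 1) = m := div_mul_cancel₀ m (by linarith)
  have h1 : g * t ≤ M := by
    calc g * t ≤ |g| * t := mul_le_mul_of_nonneg_right (le_abs_self g) ht0
      _ ≤ M * t := mul_le_mul_of_nonneg_right hgM ht0
      _ ≤ M * 1 := mul_le_mul_of_nonneg_left ht1 hM0
      _ = M := mul_one M
  have h2 : m / (M + 1) * M ≤ m := by nlinarith
  nlinarith [mul_le_mul_of_nonneg_right h1 (mul_nonneg hε.le ht0),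
    mul_le_mul_of_nonneg_right hmF ht0,
    mul_le_mul_of_nonneg_right h2 ht0]
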